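/- arXiv:1904.06836 — 2 statements merged into one kernel-verified Lean document; each statement's English description precedes it below -/
import Mathlib

section
/- Let Σ₁ and Σ₂ be real symmetric positive definite d×d matrices. Then the limit as α → 0⁺ of the Power-Euclidean distance (1/α)‖Σ₁^α − Σ₂^α‖_F equals the Log-Euclidean distance ‖log(Σ₁) − log(Σ₂)‖_F. -/
open Matrix Filter

/-- Apply a real function to a real symmetric matrix spectrally:
`U * diag (f ∘ eigenvalues) * Uᵀ`. -/
noncomputable def matFun {d : ℕ} {A : Matrix (Fin d) (Fin d) ℝ}
    (hA : A.IsHermitian) (f : ℝ → ℝ) : Matrix (Fin d) (Fin d) ℝ :=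
  (hA.eigenvectorUnitary : Matrix (Fin d) (Fin d) ℝ) *
    Matrix.diagonal (f ∘ hA.eigenvalues) *
    (star hA.eigenvectorUnitary : Matrix (Fin d) (Fin d) ℝ)

/-- Frobenius norm of a real matrix. -/
noncomputable def frobNorm {d : ℕ} (A : Matrix (Fin d) (Fin d) ℝ) : ℝ :=
  Real.sqrt (∑ i, ∑ j, (A i j) ^ 2)

lemma tendsto_rpow_sub_one_div (x : ℝ) (hx : 0 < x) :
    Tendsto (fun α : ℝ => (x ^ α - 1) / α) (nhdsWithin 0 (Set.Ioi 0)) (nhds (Real.log x)) := by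
  have h1 : HasDerivAt (fun α : ℝ => Real.exp (Real.log x * α))
      (Real.exp (Real.log x * 0) * (Real.log x * 1)) 0 :=
    (Real.hasDerivAt_exp _).comp 0 ((hasDerivAt_id 0).const_mul (Real.log x))
  have h : HasDerivAt (fun α : ℝ => x ^ α) (Real.log x) 0 := by
    simpa [Real.rpow_def_of_pos hx] using h1
  have h2 := hasDerivAt_iff_tendsto_slope.mp h
  refine (h2.mono_left (nhdsWithin_mono _ ?_)).congr ?_
  · intro y hy; exact ne_of_gt hy
  · intro α; simp [slope_def_field, Real.rpow_zero]

lemma matFun_sub {d : ℕ} {A : Matrix (Fin d) (Fin d) ℝ} (hA : A.IsHermitian) (f g : ℝ → ℝ) :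
    matFun hA f - matFun hA g = matFun hA (fun x => f x - g x) := by
  simp only [matFun, ← Matrix.sub_mul, ← Matrix.mul_sub, Matrix.diagonal_sub]
  rfl

lemma matFun_smul {d : ℕ} {A : Matrix (Fin d) (Fin d) ℝ} (hA : A.IsHermitian) (c : ℝ) (f : ℝ → ℝ) :
    c • matFun hA f = matFun hA (fun x => c * f x) := by
  have h : (fun x => c * f x) ∘ hA.eigenvalues = c • (f ∘ hA.eigenvalues) := rfl
  rw [matFun, matFun, h, Matrix.diagonal_smul, Matrix.mul_smul, Matrix.smul_mul]

lemma matFun_one {d : ℕ} {A : Matrix (Fin d) (Fin d) ℝ} (hA : A.IsHermitian) :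
    matFun hA (fun _ => 1) = 1 := by
  have h1 : Matrix.diagonal ((fun _ => (1:ℝ)) ∘ hA.eigenvalues) = 1 := Matrix.diagonal_one
  rw [matFun, h1, Matrix.mul_one]
  exact (Matrix.mem_unitaryGroup_iff).mp hA.eigenvectorUnitary.2

lemma matFun_key {d : ℕ} {A : Matrix (Fin d) (Fin d) ℝ} (hA : A.PosDef) :
    Tendsto (fun α : ℝ => matFun hA.1 (fun x => (x ^ α - 1) / α))
      (nhdsWithin 0 (Set.Ioi 0)) (nhds (matFun hA.1 Real.log)) := by
  have hpos : ∀ i, 0 < hA.1.eigenvalues i := hA.eigenvalues_pos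
  have hdiag : Tendsto
      (fun α : ℝ => Matrix.diagonal ((fun x => (x ^ α - 1) / α) ∘ hA.1.eigenvalues))
      (nhdsWithin 0 (Set.Ioi 0))
      (nhds (Matrix.diagonal (Real.log ∘ hA.1.eigenvalues))) := by
    refine tendsto_pi_nhds.mpr ?_
    intro i
    refine tendsto_pi_nhds.mpr ?_
    intro j
    by_cases hij : i = j
    · subst hij
      simpa [Matrix.diagonal_apply_eq] using
        tendsto_rpow_sub_one_div (hA.1.eigenvalues i) (hpos i)
    · simpa [Matrix.diagonal_apply_ne _ hij] using tendsto_const_nhds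
  have hcont : Continuous (fun M : Matrix (Fin d) (Fin d) ℝ =>
      (hA.1.eigenvectorUnitary : Matrix (Fin d) (Fin d) ℝ) * M *
        (star hA.1.eigenvectorUnitary : Matrix (Fin d) (Fin d) ℝ)) :=
    (continuous_const.matrix_mul continuous_id).matrix_mul continuous_const
  exact (hcont.tendsto _).comp hdiag

lemma frobNorm_continuous {d : ℕ} : Continuous (frobNorm (d := d)) := by
  unfold frobNorm
  exact Real.continuous_sqrt.comp <|
    continuous_finset_sum _ fun i _ =>
      continuous_finset_sum _ fun j _ =>
        ((continuous_apply j).comp (continuous_apply i)).pow 2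

lemma frobNorm_smul {d : ℕ} (c : ℝ) (A : Matrix (Fin d) (Fin d) ℝ) :
    frobNorm (c • A) = |c| * frobNorm A := by
  have h : ∀ i j, ((c • A) i j) ^ 2 = c ^ 2 * (A i j) ^ 2 := by
    intro i j
    simp [Matrix.smul_apply, mul_pow]
  simp only [frobNorm, h, ← Finset.mul_sum]
  rw [Real.sqrt_mul (sq_nonneg c), Real.sqrt_sq_eq_abs]

/-- For real symmetric positive definite matrices `S1, S2`, the Power-Euclidean distance
`(1/α) ‖S1^α − S2^α‖_F` tends, as `α → 0⁺`, to the Log-Euclidean distance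
`‖log S1 − log S2‖_F`. -/
theorem stmt_1 {d : ℕ} (S1 S2 : Matrix (Fin d) (Fin d) ℝ)
    (h₁ : S1.PosDef) (h₂ : S2.PosDef) :
    Tendsto
      (fun α : ℝ =>
        (1 / α) * frobNorm (matFun h₁.1 (fun x => x ^ α) - matFun h₂.1 (fun x => x ^ α)))
      (nhdsWithin 0 (Set.Ioi 0))
      (nhds (frobNorm (matFun h₁.1 Real.log - matFun h₂.1 Real.log))) := by
  have hT : Tendsto
      (fun α : ℝ => matFun h₁.1 (fun x => (x ^ α - 1) / α) -
        matFun h₂.1 (fun x => (x ^ α - 1) / α))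
      (nhdsWithin 0 (Set.Ioi 0))
      (nhds (matFun h₁.1 Real.log - matFun h₂.1 Real.log)) :=
    (matFun_key h₁).sub (matFun_key h₂)
  have hF := (frobNorm_continuous.tendsto _).comp hT
  refine hF.congr' ?_
  filter_upwards [self_mem_nhdsWithin] with α hα
  have hα0 : (0:ℝ) < α := hα
  have e : ∀ {A : Matrix (Fin d) (Fin d) ℝ} (hA : A.IsHermitian),
      matFun hA (fun x => (x ^ α - 1) / α) = (1 / α) • (matFun hA (fun x => x ^ α) - 1) := by
    intro A hA
    have hfe : (fun x : ℝ => (x ^ α - 1) / α) = (fun x => (1 / α) * (x ^ α - 1)) := by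
      funext x; ring
    rw [hfe, ← matFun_one hA, matFun_sub, matFun_smul]
  have e2 : matFun h₁.1 (fun x => (x ^ α - 1) / α) - matFun h₂.1 (fun x => (x ^ α - 1) / α)
      = (1 / α) • (matFun h₁.1 (fun x => x ^ α) - matFun h₂.1 (fun x => x ^ α)) := by
    rw [e h₁.1, e h₂.1, ← smul_sub]
    congr 1
    abel
  simp only [Function.comp_apply, e2, frobNorm_smul]
  rw [abs_of_pos (by positivity : (0:ℝ) < 1 / α)]
end

section
/- Let S be a symmetric positive definite matrix. The function F(Σ̂) = log|Σ̂| + tr(Σ̂^{-1} S) + D_vN(I, Σ̂), minimized over symmetric positive definite matrices Σ̂ commuting with S, where D_vN(A,B) = tr(A(log A − log B) − A + B), is uniquely minimized at Σ̂ = S^{1/2}. -/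
open Matrix

section

open scoped ComplexOrder

/-- The positive semidefinite square root of a positive semidefinite matrix
(as in Mathlib of December 2024, since removed). -/
noncomputable def Matrix.PosSemidef.sqrt {n 𝕜 : Type*} [Fintype n] [RCLike 𝕜] [DecidableEq n]
    {A : Matrix n n 𝕜} (hA : A.PosSemidef) : Matrix n n 𝕜 :=
  hA.1.eigenvectorUnitary.1 * diagonal ((↑) ∘ (√·) ∘ hA.1.eigenvalues) *
  (star hA.1.eigenvectorUnitary : Matrix n n 𝕜)

theorem Matrix.PosSemidef.posSemidef_sqrt {n 𝕜 : Type*} [Fintype n] [RCLike 𝕜] [DecidableEq n]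
    {A : Matrix n n 𝕜} (hA : A.PosSemidef) : PosSemidef hA.sqrt := by
  apply PosSemidef.mul_mul_conjTranspose_same
  refine posSemidef_diagonal_iff.mpr fun i ↦ ?_
  rw [Function.comp_apply, RCLike.nonneg_iff]
  constructor
  · simp only [RCLike.ofReal_re]
    exact Real.sqrt_nonneg _
  · simp only [RCLike.ofReal_im]

end

/-- The vN-MLE objective `F(Σ̂) = log|Σ̂| + tr(Σ̂⁻¹ S) + D_vN(I, Σ̂)`, where
`D_vN(I, Σ̂) = tr(−log Σ̂ − I + Σ̂)`. -/
noncomputable def vnObj {d : ℕ} (S : Matrix (Fin d) (Fin d) ℝ)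
    {T : Matrix (Fin d) (Fin d) ℝ} (hT : T.IsHermitian) : ℝ :=
  Real.log T.det + (T⁻¹ * S).trace + (-(matFun hT Real.log) - 1 + T).trace

lemma trace_matFun_log {d : ℕ} {T : Matrix (Fin d) (Fin d) ℝ} (hT' : T.IsHermitian)
    (hT : T.PosDef) : (matFun hT' Real.log).trace = Real.log T.det := by
  have h1 : (star hT'.eigenvectorUnitary : Matrix (Fin d) (Fin d) ℝ) *
      (hT'.eigenvectorUnitary : Matrix (Fin d) (Fin d) ℝ) = 1 :=
    Unitary.coe_star_mul_self _
  rw [matFun, trace_mul_cycle, h1, Matrix.one_mul, trace_diagonal]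
  rw [hT'.det_eq_prod_eigenvalues, Real.log_prod]
  · rfl
  · intro i _
    exact (hT.eigenvalues_pos i).ne'

lemma vnObj_eq {d : ℕ} (S : Matrix (Fin d) (Fin d) ℝ) {T : Matrix (Fin d) (Fin d) ℝ}
    (hT' : T.IsHermitian) (hT : T.PosDef) :
    vnObj S hT' = (T⁻¹ * S).trace + T.trace - d := by
  rw [vnObj, trace_add, trace_sub, trace_neg, trace_matFun_log hT' hT, trace_one]
  simp [Fintype.card_fin]
  ring

lemma psd_trace_nonneg {d : ℕ} {N : Matrix (Fin d) (Fin d) ℝ} (hN : N.PosSemidef) :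
    0 ≤ N.trace := by
  rw [trace]
  apply Finset.sum_nonneg
  intro i _
  have := hN.dotProduct_mulVec_nonneg (Pi.single i 1)
  simpa [dotProduct, Pi.single_apply, mulVec, Finset.sum_ite_eq, diag] using this

lemma psd_diag_nonneg {d : ℕ} {N : Matrix (Fin d) (Fin d) ℝ} (hN : N.PosSemidef)
    (i : Fin d) : 0 ≤ N i i := by
  have := hN.dotProduct_mulVec_nonneg (Pi.single i 1)
  simpa [dotProduct, Pi.single_apply, mulVec, Finset.sum_ite_eq] using this

lemma psd_sqrt_mul_self {d : ℕ} {S : Matrix (Fin d) (Fin d) ℝ} (hS : S.PosSemidef) :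
    hS.sqrt * hS.sqrt = S := by
  have h1 : (star hS.1.eigenvectorUnitary : Matrix (Fin d) (Fin d) ℝ) *
      (hS.1.eigenvectorUnitary : Matrix (Fin d) (Fin d) ℝ) = 1 :=
    Unitary.coe_star_mul_self _
  conv_rhs => rw [hS.1.spectral_theorem, Unitary.conjStarAlgAut_apply]
  simp only [Matrix.PosSemidef.sqrt, Matrix.mul_assoc]
  rw [← Matrix.mul_assoc (star _) _, h1, Matrix.one_mul, ← Matrix.mul_assoc (diagonal _) (diagonal _),
    diagonal_mul_diagonal]
  congr 3
  funext i
  simp [Real.mul_self_sqrt (hS.eigenvalues_nonneg i)]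

section main
variable {d : ℕ} {S : Matrix (Fin d) (Fin d) ℝ} (hS : S.PosDef)

lemma sqrt_posDef : (hS.posSemidef.sqrt).PosDef := by
  set A := hS.posSemidef.sqrt with hAdef
  have hpsd := hS.posSemidef.posSemidef_sqrt
  refine posDef_iff_dotProduct_mulVec.mpr ⟨hpsd.1, fun x hx => ?_⟩
  have hAA : A * A = S := psd_sqrt_mul_self hS.posSemidef
  have hne : star x ⬝ᵥ A *ᵥ x ≠ 0 := by
    intro h0
    have hAx : A *ᵥ x = 0 := (hpsd.dotProduct_mulVec_zero_iff x).mp h0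
    have hSx : S *ᵥ x = 0 := by
      rw [← hAA, ← mulVec_mulVec, hAx, mulVec_zero]
    have := hS.dotProduct_mulVec_pos hx
    rw [hSx, dotProduct_zero] at this
    exact lt_irrefl _ this
  exact lt_of_le_of_ne (hpsd.dotProduct_mulVec_nonneg x) (Ne.symm hne)

lemma obj_diff {T : Matrix (Fin d) (Fin d) ℝ} (hT : T.PosDef) :
    ((T⁻¹ * S).trace + T.trace - d) - (((hS.posSemidef.sqrt)⁻¹ * S).trace +
      (hS.posSemidef.sqrt).trace - d) =
    (T⁻¹ * ((T - hS.posSemidef.sqrt) * (T - hS.posSemidef.sqrt))).trace := by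
  set A := hS.posSemidef.sqrt with hAdef
  have hAA : A * A = S := psd_sqrt_mul_self hS.posSemidef
  have hAinv : A⁻¹ * A = 1 := Matrix.nonsing_inv_mul _ (sqrt_posDef hS).det_pos.ne'.isUnit
  have hTinv : T⁻¹ * T = 1 := Matrix.nonsing_inv_mul _ hT.det_pos.ne'.isUnit
  have hTinv' : T * T⁻¹ = 1 := Matrix.mul_nonsing_inv _ hT.det_pos.ne'.isUnit
  have h1 : A⁻¹ * S = A := by rw [← hAA, ← Matrix.mul_assoc, hAinv, Matrix.one_mul]
  have h2 : T⁻¹ * ((T - A) * (T - A)) =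
      T - A - T⁻¹ * (A * T) + T⁻¹ * S := by
    rw [← hAA]
    have : (T - A) * (T - A) = T * T - T * A - A * T + A * A := by noncomm_ring
    rw [this]
    simp only [Matrix.mul_add, Matrix.mul_sub, ← Matrix.mul_assoc, hTinv, Matrix.one_mul]
  have h3 : (T⁻¹ * (A * T)).trace = A.trace := by
    rw [trace_mul_comm, Matrix.mul_assoc, hTinv', Matrix.mul_one]
  rw [h1, h2, trace_add, trace_sub, trace_sub, h3]
  ring

end main

/-- For `S` symmetric positive definite, the vN-MLE objective, over symmetric positive
definite matrices commuting with `S`, is uniquely minimized at `Σ̂ = S^{1/2}`. -/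
theorem stmt_16 {d : ℕ} (S : Matrix (Fin d) (Fin d) ℝ) (hS : S.PosDef) :
    ∀ (T : Matrix (Fin d) (Fin d) ℝ) (hT : T.PosDef), T * S = S * T →
      vnObj S hS.posSemidef.posSemidef_sqrt.1 ≤ vnObj S hT.1 ∧
      (vnObj S hT.1 = vnObj S hS.posSemidef.posSemidef_sqrt.1 →
        T = hS.posSemidef.sqrt) := by
  intro T hT _
  set A := hS.posSemidef.sqrt with hAdef
  have hA : A.PosDef := sqrt_posDef hS
  set M := T - A with hMdef
  have hMH : Mᴴ = M := by
    rw [hMdef, conjTranspose_sub, hT.1.eq, hA.1.eq]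
  have hNpsd : (Mᴴ * T⁻¹ * M).PosSemidef := hT.inv.posSemidef.conjTranspose_mul_mul_same M
  have htr : (T⁻¹ * (M * M)).trace = (Mᴴ * T⁻¹ * M).trace := by
    rw [← Matrix.mul_assoc, trace_mul_comm, ← Matrix.mul_assoc, hMH]
  have hobjT : vnObj S hT.1 = (T⁻¹ * S).trace + T.trace - d := vnObj_eq S hT.1 hT
  have hobjA : vnObj S hS.posSemidef.posSemidef_sqrt.1 =
      (A⁻¹ * S).trace + A.trace - d := vnObj_eq S _ hA
  have hdiff : vnObj S hT.1 - vnObj S hS.posSemidef.posSemidef_sqrt.1 =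
      (Mᴴ * T⁻¹ * M).trace := by
    rw [hobjT, hobjA, obj_diff hS hT, htr]
  constructor
  · have := psd_trace_nonneg hNpsd
    linarith [hdiff]
  · intro heq
    have htr0 : (Mᴴ * T⁻¹ * M).trace = 0 := by
      rw [← hdiff, heq, sub_self]
    have hdiag : ∀ i, (Mᴴ * T⁻¹ * M) i i = 0 := by
      have := (Finset.sum_eq_zero_iff_of_nonneg
        (fun i _ => psd_diag_nonneg hNpsd i)).mp htr0
      intro i; exact this i (Finset.mem_univ i)
    have hMv : ∀ x : Fin d → ℝ, M *ᵥ x ≠ 0 →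
        0 < star x ⬝ᵥ (Mᴴ * T⁻¹ * M) *ᵥ x := by
      intro x hx
      have : star x ⬝ᵥ (Mᴴ * T⁻¹ * M) *ᵥ x =
          star (M *ᵥ x) ⬝ᵥ T⁻¹ *ᵥ (M *ᵥ x) := by
        simp only [star_mulVec, dotProduct_mulVec, vecMul_vecMul, hMH]
      rw [this]
      exact hT.inv.dotProduct_mulVec_pos hx
    have hM0 : M = 0 := by
      ext j i
      by_contra hji
      have hcol : M *ᵥ Pi.single i 1 ≠ 0 := by
        intro h
        apply hji
        have := congrFun h j
        simpa [mulVec_single] using this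
      have hpos := hMv (Pi.single i 1) hcol
      have : star (Pi.single i (1:ℝ)) ⬝ᵥ (Mᴴ * T⁻¹ * M) *ᵥ Pi.single i 1 =
          (Mᴴ * T⁻¹ * M) i i := by
        simp [dotProduct, Pi.single_apply, mulVec, Finset.sum_ite_eq]
      rw [this, hdiag i] at hpos
      exact lt_irrefl _ hpos
    rw [hMdef] at hM0
    exact sub_eq_zero.mp hM0
end
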